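/- arXiv:0812.4199 — 2 statements merged into one kernel-verified Lean document; each statement's English description precedes it below -/
import Mathlib

section
/- With payment dates T_a < T_{a+1} < ... < T_b and α_i = T_i − T_{i−1}, for a C¹ function S on [T_a, T_b] and D(T_a,u) = exp(−∫_{T_a}^u r_s ds), the identity ∫_{T_a}^{T_b} D(T_a,u)(u − T_{β(u)−1})S'(u) du = Σ_{i=a+1}^{b} α_i D(T_a,T_i)S(T_i) − ∫_{T_a}^{T_b} D(T_a,u)S(u) du + ∫_{T_a}^{T_b} S(u)(u − T_{β(u)−1})r_u D(T_a,u) du holds, where T_{β(u)−1} = T_i for u ∈ (T_i, T_{i+1}]. -/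
open Real intervalIntegral MeasureTheory

/-- Integration by parts on one accrual interval. -/
lemma accrual_ibp_piece (r S S' D : ℝ → ℝ)
    (hr : Continuous r)
    (hS : ∀ u, HasDerivAt S (S' u) u)
    (hS' : Continuous S')
    (hD' : ∀ u, HasDerivAt D (-(r u * D u)) u)
    (hDc : Continuous D) (c d : ℝ) :
    (∫ u in c..d, D u * (u - c) * S' u)
      = (d - c) * D d * S d - (∫ u in c..d, D u * S u)
        + ∫ u in c..d, S u * (u - c) * r u * D u := by
  have hScont : Continuous S := by
    refine continuous_iff_continuousAt.mpr fun u => (hS u).continuousAt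
  have hF : ∀ u, HasDerivAt (fun u => D u * (u - c) * S u)
      (D u * (u - c) * S' u + D u * S u - S u * (u - c) * r u * D u) u := by
    intro u
    have h1 := ((hD' u).mul ((hasDerivAt_id u).sub_const c)).mul (hS u)
    refine HasDerivAt.congr_deriv h1 ?_
    simp only [id_eq, Pi.mul_apply]
    ring
  have hc1 : Continuous (fun u => D u * (u - c) * S' u) := by fun_prop
  have hc2 : Continuous (fun u => D u * S u) := by fun_prop
  have hc3 : Continuous (fun u => S u * (u - c) * r u * D u) := by fun_prop
  have hint : Continuous
      (fun u => D u * (u - c) * S' u + D u * S u - S u * (u - c) * r u * D u) := by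
    fun_prop
  have key : ((∫ u in c..d, D u * (u - c) * S' u) + ∫ u in c..d, D u * S u)
      - (∫ u in c..d, S u * (u - c) * r u * D u)
      = D d * (d - c) * S d - D c * (c - c) * S c := by
    have k0 := intervalIntegral.integral_eq_sub_of_hasDerivAt
      (f := fun u => D u * (u - c) * S u) (fun u _ => hF u) (hint.intervalIntegrable c d)
    rw [intervalIntegral.integral_sub ((hc1.intervalIntegrable c d).add
        (hc2.intervalIntegrable c d)) (hc3.intervalIntegrable c d),
      intervalIntegral.integral_add (hc1.intervalIntegrable c d)
        (hc2.intervalIntegrable c d)] at k0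
    exact k0
  have h0 : D c * (c - c) * S c = 0 := by ring
  have h1 : D d * (d - c) * S d = (d - c) * D d * S d := by ring
  rw [h0, h1] at key
  linarith

theorem accrual_integration_by_parts
    (a b : ℕ) (hab : a < b)
    (T : ℕ → ℝ) (hTmono : ∀ i, a ≤ i → i < b → T i < T (i + 1))
    (r S S' : ℝ → ℝ)
    (hr : Continuous r)
    (hS : ∀ u, HasDerivAt S (S' u) u)
    (hS' : Continuous S')
    (D : ℝ → ℝ)
    (hD : ∀ u, D u = Real.exp (-(∫ s in (T a)..u, r s)))
    (g : ℝ → ℝ)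
    (hg : ∀ i, a ≤ i → i < b → ∀ u ∈ Set.Ioc (T i) (T (i + 1)), g u = u - T i) :
    (∫ u in (T a)..(T b), D u * g u * S' u)
      = (∑ i ∈ Finset.Ioc a b, (T i - T (i - 1)) * D (T i) * S (T i))
        - (∫ u in (T a)..(T b), D u * S u)
        + ∫ u in (T a)..(T b), S u * g u * r u * D u := by
  have hScont : Continuous S := continuous_iff_continuousAt.mpr fun u => (hS u).continuousAt
  have hDfun : D = fun u => Real.exp (-(∫ s in (T a)..u, r s)) := funext hD
  have hD' : ∀ u, HasDerivAt D (-(r u * D u)) u := by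
    intro u
    have hI : HasDerivAt (fun x => ∫ s in (T a)..x, r s) (r u) u :=
      intervalIntegral.integral_hasDerivAt_right (hr.intervalIntegrable _ _)
        (hr.stronglyMeasurableAtFilter _ _) hr.continuousAt
    have h2 := hI.neg.exp
    have h3 : HasDerivAt D (Real.exp (-(∫ s in (T a)..u, r s)) * -r u) u := by
      rw [hDfun]; exact h2
    have h4 : Real.exp (-(∫ s in (T a)..u, r s)) * -r u = -(r u * D u) := by
      rw [hD u]; ring
    rwa [h4] at h3
  have hDc : Continuous D := continuous_iff_continuousAt.mpr fun u => (hD' u).continuousAt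
  set n := b - a with hn
  have han : a + n = b := by omega
  have hlt : ∀ k, k < n → T (a + k) < T (a + k + 1) := by
    intro k hk
    exact hTmono _ (Nat.le_add_right a k) (by omega)
  have hgk : ∀ k, k < n → ∀ u ∈ Set.Ioc (T (a + k)) (T (a + k + 1)), g u = u - T (a + k) := by
    intro k hk u hu
    exact hg (a + k) (Nat.le_add_right a k) (by omega) u hu
  have hc1 : ∀ c : ℝ, Continuous (fun u => D u * (u - c) * S' u) := by intro c; fun_prop
  have hc2 : Continuous (fun u => D u * S u) := by fun_prop
  have hc3 : ∀ c : ℝ, Continuous (fun u => S u * (u - c) * r u * D u) := by intro c; fun_prop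
  have hIoc : ∀ k, k < n → Set.uIoc (T (a + k)) (T (a + k + 1))
      = Set.Ioc (T (a + k)) (T (a + k + 1))  := by
    intro k hk
    exact Set.uIoc_of_le (hlt k hk).le
  have hi1 : ∀ k, k < n →
      IntervalIntegrable (fun u => D u * g u * S' u) volume (T (a + k)) (T (a + k + 1)) := by
    intro k hk
    rw [intervalIntegrable_iff_integrableOn_Ioc_of_le (hlt k hk).le]
    refine ((hc1 (T (a + k))).integrableOn_Ioc).congr ?_
    refine MeasureTheory.ae_restrict_of_forall_mem measurableSet_Ioc fun u hu => ?_
    simp only [hgk k hk u hu]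
  have hi2 : ∀ k, k < n →
      IntervalIntegrable (fun u => D u * S u) volume (T (a + k)) (T (a + k + 1)) := by
    intro k hk; exact hc2.intervalIntegrable _ _
  have hi3 : ∀ k, k < n →
      IntervalIntegrable (fun u => S u * g u * r u * D u) volume (T (a + k)) (T (a + k + 1)) := by
    intro k hk
    rw [intervalIntegrable_iff_integrableOn_Ioc_of_le (hlt k hk).le]
    refine ((hc3 (T (a + k))).integrableOn_Ioc).congr ?_
    refine MeasureTheory.ae_restrict_of_forall_mem measurableSet_Ioc fun u hu => ?_
    simp only [hgk k hk u hu]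
  have hmain : ∀ k, k < n →
      (∫ u in T (a+k)..T (a+k+1), D u * g u * S' u)
        = (T (a+k+1) - T (a+k)) * D (T (a+k+1)) * S (T (a+k+1))
          - (∫ u in T (a+k)..T (a+k+1), D u * S u)
          + ∫ u in T (a+k)..T (a+k+1), S u * g u * r u * D u := by
    intro k hk
    have e1 : (∫ u in T (a+k)..T (a+k+1), D u * g u * S' u)
        = ∫ u in T (a+k)..T (a+k+1), D u * (u - T (a+k)) * S' u := by
      refine intervalIntegral.integral_congr_ae
        (Filter.Eventually.of_forall fun x hx => ?_)
      rw [hgk k hk x (by rwa [hIoc k hk] at hx)]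
    have e3 : (∫ u in T (a+k)..T (a+k+1), S u * g u * r u * D u)
        = ∫ u in T (a+k)..T (a+k+1), S u * (u - T (a+k)) * r u * D u := by
      refine intervalIntegral.integral_congr_ae
        (Filter.Eventually.of_forall fun x hx => ?_)
      rw [hgk k hk x (by rwa [hIoc k hk] at hx)]
    rw [e1, e3]
    exact accrual_ibp_piece r S S' D hr hS hS' hD' hDc (T (a+k)) (T (a+k+1))
  have split1 := intervalIntegral.sum_integral_adjacent_intervals
      (a := fun k => T (a + k)) (n := n) (μ := volume) (fun k hk => hi1 k hk)
  have split2 := intervalIntegral.sum_integral_adjacent_intervals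
      (a := fun k => T (a + k)) (n := n) (μ := volume) (fun k hk => hi2 k hk)
  have split3 := intervalIntegral.sum_integral_adjacent_intervals
      (a := fun k => T (a + k)) (n := n) (μ := volume) (fun k hk => hi3 k hk)
  simp only [Nat.add_zero, han] at split1 split2 split3
  rw [← split1, ← split2, ← split3]
  have hsum : (∑ i ∈ Finset.Ioc a b, (T i - T (i - 1)) * D (T i) * S (T i))
      = ∑ k ∈ Finset.range n, (T (a+k+1) - T (a+k)) * D (T (a+k+1)) * S (T (a+k+1)) := by
    rw [← Finset.Ico_add_one_add_one_eq_Ioc, Finset.sum_Ico_eq_sum_range,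
      show b + 1 - (a + 1) = n from by omega]
    refine Finset.sum_congr rfl fun k hk => ?_
    have h1 : a + 1 + k = a + k + 1 := by omega
    have h2 : a + k + 1 - 1 = a + k := by omega
    rw [h1, h2]
  rw [hsum, ← Finset.sum_sub_distrib, ← Finset.sum_add_distrib]
  exact Finset.sum_congr rfl fun k hk => hmain k (Finset.mem_range.mp hk)
end

section
/- Decomposition of the option on a decreasing function: let φ: [0,∞) → (0,∞) be given by φ(y) = ∫_{T_a}^{T_b} h(u)A(u)e^{−B(u)y} du with h ≥ 0 continuous, A > 0, B > 0 continuous, and suppose φ(y*) = L for some y* ≥ 0 and L > 0. Then for every Y ≥ 0, (L − φ(Y))⁺ = ∫_{T_a}^{T_b} h(u)A(u)(e^{−B(u)y*} − e^{−B(u)Y})⁺ du. -/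
open Real

theorem jamshidian_decomposition_identity
    (Ta Tb : ℝ) (hT : Ta ≤ Tb)
    (A B h : ℝ → ℝ)
    (hA : ContinuousOn A (Set.Icc Ta Tb))
    (hB : ContinuousOn B (Set.Icc Ta Tb))
    (hh : ContinuousOn h (Set.Icc Ta Tb))
    (hApos : ∀ u ∈ Set.Icc Ta Tb, 0 < A u)
    (hBpos : ∀ u ∈ Set.Icc Ta Tb, 0 < B u)
    (hhnn : ∀ u ∈ Set.Icc Ta Tb, 0 ≤ h u)
    (φ : ℝ → ℝ)
    (hφ : ∀ y, φ y = ∫ u in Ta..Tb, h u * A u * Real.exp (-(B u) * y))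
    (L ystar : ℝ) (hL : 0 < L) (hystar : 0 ≤ ystar)
    (hstrike : φ ystar = L) :
    ∀ Y : ℝ, 0 ≤ Y →
      max (L - φ Y) 0
        = ∫ u in Ta..Tb, h u * A u *
            max (Real.exp (-(B u) * ystar) - Real.exp (-(B u) * Y)) 0 := by
  intro Y hY
  have huIcc : Set.uIcc Ta Tb = Set.Icc Ta Tb := Set.uIcc_of_le hT
  have hint : ∀ y : ℝ, IntervalIntegrable
      (fun u => h u * A u * Real.exp (-(B u) * y)) MeasureTheory.volume Ta Tb := by
    intro y
    apply ContinuousOn.intervalIntegrable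
    rw [huIcc]
    exact ((hh.mul hA).mul (ContinuousOn.rexp ((hB.neg.mul continuousOn_const))))
  rcases le_total Y ystar with hle | hle
  · -- Y ≤ ystar : both sides vanish
    have hrhs : (∫ u in Ta..Tb, h u * A u *
        max (Real.exp (-(B u) * ystar) - Real.exp (-(B u) * Y)) 0) = 0 := by
      rw [intervalIntegral.integral_congr (g := fun _ => (0:ℝ))]
      · simp
      · intro u hu
        rw [huIcc] at hu
        have hBu := hBpos u hu
        have : Real.exp (-(B u) * ystar) ≤ Real.exp (-(B u) * Y) := by
          apply Real.exp_le_exp.mpr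
          nlinarith
        have hm : max (Real.exp (-(B u) * ystar) - Real.exp (-(B u) * Y)) 0 = 0 :=
          max_eq_right (by linarith)
        dsimp only
        rw [hm, mul_zero]
    have hmono : φ ystar ≤ φ Y := by
      rw [hφ, hφ]
      apply intervalIntegral.integral_mono_on hT (hint ystar) (hint Y)
      intro u hu
      have hBu := hBpos u hu
      have hAu := hApos u hu
      have hhu := hhnn u hu
      have : Real.exp (-(B u) * ystar) ≤ Real.exp (-(B u) * Y) := by
        apply Real.exp_le_exp.mpr
        nlinarith
      nlinarith [mul_nonneg hhu hAu.le]
    rw [hrhs, max_eq_right (by linarith [hstrike])]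
  · -- ystar ≤ Y
    have hcongr : (∫ u in Ta..Tb, h u * A u *
        max (Real.exp (-(B u) * ystar) - Real.exp (-(B u) * Y)) 0)
        = ∫ u in Ta..Tb, (h u * A u * Real.exp (-(B u) * ystar)
            - h u * A u * Real.exp (-(B u) * Y)) := by
      apply intervalIntegral.integral_congr
      intro u hu
      rw [huIcc] at hu
      have hBu := hBpos u hu
      have : Real.exp (-(B u) * Y) ≤ Real.exp (-(B u) * ystar) := by
        apply Real.exp_le_exp.mpr
        nlinarith
      dsimp only
      rw [max_eq_left (by linarith)]
      ring
    rw [hcongr, intervalIntegral.integral_sub (hint ystar) (hint Y), ← hφ, ← hφ, hstrike]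
    have hmono : φ Y ≤ φ ystar := by
      rw [hφ, hφ]
      apply intervalIntegral.integral_mono_on hT (hint Y) (hint ystar)
      intro u hu
      have hBu := hBpos u hu
      have hAu := hApos u hu
      have hhu := hhnn u hu
      have : Real.exp (-(B u) * Y) ≤ Real.exp (-(B u) * ystar) := by
        apply Real.exp_le_exp.mpr
        nlinarith
      nlinarith [mul_nonneg hhu hAu.le]
    rw [max_eq_left (by linarith [hstrike])]
end
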